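/- Let 1<q<2<r, A,B>0 with A^{r−2}·B^{2−q} < (r−2)^{r−2}(2−q)^{2−q}/(r−q)^{r−q}, and set t_B = ((2−q)/(B(r−q)))^{1/(r−2)}. Then t_B² − A·t_B^q − B·t_B^r = t_B²·[(r−2)/(r−q) − A·B^{(2−q)/(r−2)}·((r−q)/(2−q))^{(2−q)/(r−2)}] > 0. -/

import Mathlib

theorem stmt1 (q r A B : ℝ) (hq1 : 1 < q) (hq2 : q < 2) (hr : 2 < r)
    (hA : 0 < A) (hB : 0 < B)
    (hd : A ^ (r - 2) * B ^ (2 - q) <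
      (r - 2) ^ (r - 2) * (2 - q) ^ (2 - q) / (r - q) ^ (r - q)) :
    (((2 - q) / (B * (r - q))) ^ ((1:ℝ) / (r - 2))) ^ (2:ℝ)
        - A * (((2 - q) / (B * (r - q))) ^ ((1:ℝ) / (r - 2))) ^ q
        - B * (((2 - q) / (B * (r - q))) ^ ((1:ℝ) / (r - 2))) ^ r
      = (((2 - q) / (B * (r - q))) ^ ((1:ℝ) / (r - 2))) ^ (2:ℝ) *
          ((r - 2) / (r - q)
            - A * B ^ ((2 - q) / (r - 2)) * ((r - q) / (2 - q)) ^ ((2 - q) / (r - 2))) ∧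
    0 < (((2 - q) / (B * (r - q))) ^ ((1:ℝ) / (r - 2))) ^ (2:ℝ) *
          ((r - 2) / (r - q)
            - A * B ^ ((2 - q) / (r - 2)) * ((r - q) / (2 - q)) ^ ((2 - q) / (r - 2))) := by
  have hs : (0:ℝ) < r - 2 := by linarith
  have hu : (0:ℝ) < 2 - q := by linarith
  have hv : (0:ℝ) < r - q := by linarith
  have hsne : (r - 2) ≠ 0 := ne_of_gt hs
  have hvne : (r - q) ≠ 0 := ne_of_gt hv
  have hune : (2 - q) ≠ 0 := ne_of_gt hu
  set c : ℝ := (2 - q) / (B * (r - q)) with hc_def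
  clear_value c
  have hc : 0 < c := hc_def ▸ div_pos hu (mul_pos hB hv)
  have hpow : ∀ e : ℝ, (c ^ ((1:ℝ)/(r-2))) ^ e = c ^ (e/(r-2)) := by
    intro e
    rw [← Real.rpow_mul hc.le]
    congr 1
    field_simp
  have h2s : c ^ ((2:ℝ)/(r-2)) = (c ^ ((1:ℝ)/(r-2))) ^ (2:ℝ) := (hpow 2).symm
  have hr3 : (c ^ ((1:ℝ)/(r-2))) ^ r = c ^ ((2:ℝ)/(r-2)) * c := by
    rw [hpow r]
    have h : r/(r-2) = 2/(r-2) + 1 := by field_simp; ring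
    rw [h, Real.rpow_add hc, Real.rpow_one]
  have hBc : B * c = (2 - q)/(r - q) := by
    rw [hc_def]
    field_simp
  have hcq : (c ^ ((1:ℝ)/(r-2))) ^ q
      = c ^ ((2:ℝ)/(r-2)) * (B ^ ((2-q)/(r-2)) * ((r-q)/(2-q)) ^ ((2-q)/(r-2))) := by
    rw [hpow q]
    have h1 : q/(r-2) = 2/(r-2) + (-((2-q)/(r-2))) := by field_simp; ring
    rw [h1, Real.rpow_add hc]
    congr 1
    rw [Real.rpow_neg hc.le, ← Real.inv_rpow hc.le]
    have hcinv : c⁻¹ = B * ((r-q)/(2-q)) := by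
      rw [hc_def]
      field_simp
    rw [hcinv, Real.mul_rpow hB.le (by positivity)]
  have hX : A * B ^ ((2-q)/(r-2)) * ((r-q)/(2-q)) ^ ((2-q)/(r-2)) < (r-2)/(r-q) := by
    have hmono := Real.rpow_lt_rpow (by positivity) hd (by positivity : (0:ℝ) < 1/(r-2))
    have hL : (A ^ (r-2) * B ^ (2-q)) ^ ((1:ℝ)/(r-2)) = A * B ^ ((2-q)/(r-2)) := by
      rw [Real.mul_rpow (by positivity) (by positivity), ← Real.rpow_mul hA.le,
        ← Real.rpow_mul hB.le]
      rw [show (r-2)*((1:ℝ)/(r-2)) = 1 by field_simp, Real.rpow_one,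
        show (2-q)*((1:ℝ)/(r-2)) = (2-q)/(r-2) by ring]
    have hR : ((r-2) ^ (r-2) * (2-q) ^ (2-q) / (r-q) ^ (r-q)) ^ ((1:ℝ)/(r-2))
        = (r-2)/(r-q) * ((2-q)/(r-q)) ^ ((2-q)/(r-2)) := by
      have hvv : (r-q) ^ (r-q) = (r-q) ^ (r-2) * (r-q) ^ (2-q) := by
        rw [← Real.rpow_add hv]; congr 1; ring
      have hsplit : (r-2) ^ (r-2) * (2-q) ^ (2-q) / (r-q) ^ (r-q)
          = ((r-2)/(r-q)) ^ (r-2) * ((2-q)/(r-q)) ^ (2-q) := by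
        rw [hvv, Real.div_rpow hs.le hv.le, Real.div_rpow hu.le hv.le]
        field_simp
      rw [hsplit, Real.mul_rpow (by positivity) (by positivity),
        ← Real.rpow_mul (by positivity), ← Real.rpow_mul (by positivity),
        show (r-2)*((1:ℝ)/(r-2)) = 1 by field_simp, Real.rpow_one,
        show (2-q)*((1:ℝ)/(r-2)) = (2-q)/(r-2) by ring]
    rw [hL, hR] at hmono
    have hE : (0:ℝ) < ((r-q)/(2-q)) ^ ((2-q)/(r-2)) := by positivity
    have := mul_lt_mul_of_pos_right hmono hE
    have hone : ((2-q)/(r-q)) ^ ((2-q)/(r-2)) * ((r-q)/(2-q)) ^ ((2-q)/(r-2)) = 1 := by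
      rw [← Real.mul_rpow (by positivity) (by positivity),
        show (2-q)/(r-q) * ((r-q)/(2-q)) = 1 by field_simp, Real.one_rpow]
    calc A * B ^ ((2-q)/(r-2)) * ((r-q)/(2-q)) ^ ((2-q)/(r-2))
        < (r-2)/(r-q) * ((2-q)/(r-q)) ^ ((2-q)/(r-2)) * ((r-q)/(2-q)) ^ ((2-q)/(r-2)) := this
      _ = (r-2)/(r-q) := by rw [mul_assoc, hone, mul_one]
  constructor
  · have hK : (r-2)/(r-q) = 1 - (2-q)/(r-q) := by field_simp; ring
    rw [hcq, hr3, hK, ← h2s]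
    linear_combination (-(c ^ ((2:ℝ)/(r-2)))) * hBc
  · rw [← h2s]
    exact mul_pos (Real.rpow_pos_of_pos hc _) (by linarith)
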